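/- Let n ≥ 1. (i) For every x ∈ ℝⁿ and every r > 0, lim_{s→0⁺} s · Λ_{ℝⁿ}(x, r, s) = 1. (ii) If E ⊂ ℝⁿ is measurable and the limit Ξ_E = lim_{s→0⁺} s · Λ_E(x, r, s) exists for some (hence all) x ∈ ℝⁿ and r > 0, then Ξ_{E^c} = lim_{s→0⁺} s · Λ_{E^c}(x, r, s) also exists and Ξ_E + Ξ_{E^c} = 1, where E^c = ℝⁿ \ E. -/

import Mathlib

open MeasureTheory Real Filter Topology Set
open scoped ENNReal

/-- The classical heat kernel on `ℝⁿ`. -/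
noncomputable def heatKernel (n : ℕ) (t : ℝ) (x y : EuclideanSpace ℝ (Fin n)) : ℝ :=
  (4 * π * t) ^ (-(n : ℝ) / 2) * Real.exp (-‖x - y‖ ^ 2 / (4 * t))

/-- `Λ_E(x,r,s) = ∫₁^∞ t^{-(1+s)} ∫_{E \ B(x,r)} p_t(x,y) dy dt`. -/
noncomputable def LambdaE (n : ℕ) (E : Set (EuclideanSpace ℝ (Fin n)))
    (x : EuclideanSpace ℝ (Fin n)) (r s : ℝ) : ℝ≥0∞ :=
  ∫⁻ t in Set.Ioi (1:ℝ), ENNReal.ofReal (t ^ (-(1 + s))) *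
    ∫⁻ y in E \ Metric.ball x r, ENNReal.ofReal (heatKernel n t x y)

/-- The heat kernel is nonnegative. -/
lemma heatKernel_nonneg (n : ℕ) (t : ℝ) (x y : EuclideanSpace ℝ (Fin n)) (ht : 0 < t) :
    0 ≤ heatKernel n t x y := by
  unfold heatKernel
  have : (0:ℝ) < 4 * π * t := by positivity
  positivity

/-- Integrability of the Gaussian on Euclidean space. -/
lemma integrable_gauss (n : ℕ) {b : ℝ} (hb : 0 < b) :
    Integrable (fun y : EuclideanSpace ℝ (Fin n) => rexp (-b * ‖y‖ ^ 2)) := by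
  have hC : Integrable (fun v : EuclideanSpace ℝ (Fin n) =>
      Complex.exp (-(b:ℂ) * (‖v‖:ℂ) ^ 2 + 0 * (inner ℝ (0 : EuclideanSpace ℝ (Fin n)) v : ℝ))) :=
    GaussianFourier.integrable_cexp_neg_mul_sq_norm_add (by simpa using hb) 0 0
  have := hC.norm
  refine this.congr (Eventually.of_forall fun v => ?_)
  have h1 : -(b:ℂ) * (‖v‖:ℂ) ^ 2 + 0 * ((inner ℝ (0 : EuclideanSpace ℝ (Fin n)) v : ℝ) : ℂ)
      = ((-b * ‖v‖ ^ 2 : ℝ) : ℂ) := by push_cast; ring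
  simp only [h1, Complex.norm_exp_ofReal]

/-- Total mass of the heat kernel is 1. -/
lemma heatKernel_lintegral_total (n : ℕ) (x : EuclideanSpace ℝ (Fin n)) {t : ℝ} (ht : 0 < t) :
    ∫⁻ y, ENNReal.ofReal (heatKernel n t x y) = 1 := by
  have hπ := Real.pi_pos
  set b : ℝ := (4 * t)⁻¹ with hbdef
  have hb : 0 < b := by positivity
  have h4πt : (0:ℝ) < 4 * π * t := by positivity
  have hexp : ∀ y : EuclideanSpace ℝ (Fin n),
      heatKernel n t x y = (4 * π * t) ^ (-(n : ℝ) / 2) * rexp (-b * ‖x - y‖ ^ 2) := by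
    intro y
    unfold heatKernel
    congr 2
    rw [neg_div, div_eq_inv_mul, hbdef, neg_mul]
  have hint : Integrable (fun y : EuclideanSpace ℝ (Fin n) => rexp (-b * ‖x - y‖ ^ 2)) :=
    (integrable_comp_sub_left (fun y : EuclideanSpace ℝ (Fin n) => rexp (-b * ‖y‖ ^ 2)) x).2
      (integrable_gauss n hb)
  have hval : ∫ y : EuclideanSpace ℝ (Fin n), rexp (-b * ‖x - y‖ ^ 2)
      = (π / b) ^ ((n : ℝ) / 2) := by
    rw [integral_sub_left_eq_self (fun y : EuclideanSpace ℝ (Fin n) => rexp (-b * ‖y‖ ^ 2))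
      volume x]
    rw [GaussianFourier.integral_rexp_neg_mul_sq_norm hb]
    simp [finrank_euclideanSpace_fin]
  calc ∫⁻ y, ENNReal.ofReal (heatKernel n t x y)
      = ∫⁻ y, ENNReal.ofReal ((4 * π * t) ^ (-(n : ℝ) / 2)) *
          ENNReal.ofReal (rexp (-b * ‖x - y‖ ^ 2)) := by
        refine lintegral_congr fun y => ?_
        rw [hexp y, ENNReal.ofReal_mul (by positivity)]
    _ = ENNReal.ofReal ((4 * π * t) ^ (-(n : ℝ) / 2)) *
          ∫⁻ y, ENNReal.ofReal (rexp (-b * ‖x - y‖ ^ 2)) :=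
        lintegral_const_mul' _ _ ENNReal.ofReal_ne_top
    _ = ENNReal.ofReal ((4 * π * t) ^ (-(n : ℝ) / 2)) *
          ENNReal.ofReal ((π / b) ^ ((n : ℝ) / 2)) := by
        rw [← ofReal_integral_eq_lintegral_ofReal hint
          (Eventually.of_forall fun y => (Real.exp_pos _).le), hval]
    _ = 1 := by
        rw [← ENNReal.ofReal_mul (by positivity)]
        have hpb : π / b = 4 * π * t := by
          rw [hbdef]
          field_simp
        rw [hpb, ← Real.rpow_add h4πt,
          show -(n:ℝ) / 2 + (n:ℝ) / 2 = 0 by ring, Real.rpow_zero, ENNReal.ofReal_one]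

/-- Measurability in `t` of the partial mass. -/
lemma measurable_heat_setLintegral (n : ℕ) (x : EuclideanSpace ℝ (Fin n))
    {A : Set (EuclideanSpace ℝ (Fin n))} (hA : MeasurableSet A) :
    Measurable fun t : ℝ => ∫⁻ y in A, ENNReal.ofReal (heatKernel n t x y) := by
  have hjoint : Measurable fun p : ℝ × EuclideanSpace ℝ (Fin n) =>
      ENNReal.ofReal (heatKernel n p.1 x p.2) := by
    unfold heatKernel; fun_prop
  have hind : Measurable fun p : ℝ × EuclideanSpace ℝ (Fin n) =>
      (Prod.snd ⁻¹' A).indicator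
        (fun p : ℝ × EuclideanSpace ℝ (Fin n) => ENNReal.ofReal (heatKernel n p.1 x p.2)) p :=
    hjoint.indicator (measurable_snd hA)
  have hmeas := Measurable.lintegral_prod_right'
    (ν := (volume : Measure (EuclideanSpace ℝ (Fin n)))) hind
  have heq : ∀ t : ℝ, (∫⁻ y in A, ENNReal.ofReal (heatKernel n t x y))
      = ∫⁻ y, (Prod.snd ⁻¹' A).indicator
          (fun p : ℝ × EuclideanSpace ℝ (Fin n) => ENNReal.ofReal (heatKernel n p.1 x p.2))
          (t, y) := by
    intro t
    rw [← lintegral_indicator hA]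
    refine lintegral_congr fun y => ?_
    by_cases hy : y ∈ A <;> simp [Set.indicator, hy]
  simpa only [heq] using hmeas

/-- `∫₁^∞ t^a dt` as a lower integral, for `a < -1`. -/
lemma lintegral_Ioi_rpow_ofReal {a : ℝ} (ha : a < -1) :
    ∫⁻ t in Set.Ioi (1:ℝ), ENNReal.ofReal (t ^ a) = ENNReal.ofReal (-1 / (a + 1)) := by
  have hnn : 0 ≤ᵐ[volume.restrict (Set.Ioi (1:ℝ))] fun t : ℝ => t ^ a := by
    filter_upwards [ae_restrict_mem measurableSet_Ioi] with t ht
    have : (0:ℝ) < t := lt_trans one_pos ht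
    positivity
  rw [← ofReal_integral_eq_lintegral_ofReal (integrableOn_Ioi_rpow_of_lt ha one_pos) hnn,
    integral_Ioi_rpow_of_lt ha one_pos, Real.one_rpow]

/-- (i) `lim_{s→0⁺} s Λ_{ℝⁿ}(x,r,s) = 1` for all `x` and `r > 0`;
(ii) if `Ξ_E = lim_{s→0⁺} s Λ_E(x,r,s)` exists, then `Ξ_{E^c}` exists and `Ξ_E + Ξ_{E^c} = 1`. -/
theorem statement13 (n : ℕ) (hn : 1 ≤ n) :
    (∀ x : EuclideanSpace ℝ (Fin n), ∀ r : ℝ, 0 < r →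
        Tendsto (fun s : ℝ => ENNReal.ofReal s * LambdaE n Set.univ x r s)
          (𝓝[>] (0:ℝ)) (𝓝 1)) ∧
      ∀ E : Set (EuclideanSpace ℝ (Fin n)), MeasurableSet E →
        ∀ x : EuclideanSpace ℝ (Fin n), ∀ r : ℝ, 0 < r → ∀ ΞE : ℝ≥0∞,
          Tendsto (fun s : ℝ => ENNReal.ofReal s * LambdaE n E x r s)
            (𝓝[>] (0:ℝ)) (𝓝 ΞE) →
          ∃ Ξc : ℝ≥0∞,
            Tendsto (fun s : ℝ => ENNReal.ofReal s * LambdaE n Eᶜ x r s)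
              (𝓝[>] (0:ℝ)) (𝓝 Ξc) ∧ ΞE + Ξc = 1 := by
  have hπ := Real.pi_pos
  have hnR : (0:ℝ) < n := by exact_mod_cast hn
  -- notation
  set V := EuclideanSpace ℝ (Fin n) with hV
  -- F s t
  have hFmeas : ∀ s : ℝ, Measurable fun t : ℝ => ENNReal.ofReal (t ^ (-(1 + s))) := by
    intro s; fun_prop
  -- the basic rpow integral
  have hFint : ∀ s : ℝ, 0 < s →
      ∫⁻ t in Set.Ioi (1:ℝ), ENNReal.ofReal (t ^ (-(1 + s))) = ENNReal.ofReal (1 / s) := by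
    intro s hs
    rw [lintegral_Ioi_rpow_ofReal (by linarith)]
    norm_num
  have hsF : ∀ s : ℝ, 0 < s →
      ENNReal.ofReal s * ∫⁻ t in Set.Ioi (1:ℝ), ENNReal.ofReal (t ^ (-(1 + s))) = 1 := by
    intro s hs
    rw [hFint s hs, ← ENNReal.ofReal_mul hs.le, mul_one_div, div_self hs.ne', ENNReal.ofReal_one]
  -- upper bound for any set E
  have key_le : ∀ (E : Set V) (x : V) (r s : ℝ), 0 < s →
      ENNReal.ofReal s * LambdaE n E x r s ≤ 1 := by
    intro E x r s hs
    have hΛ : LambdaE n E x r s ≤ ∫⁻ t in Set.Ioi (1:ℝ), ENNReal.ofReal (t ^ (-(1 + s))) := by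
      unfold LambdaE
      refine setLIntegral_mono' measurableSet_Ioi fun t ht => ?_
      have ht0 : (0:ℝ) < t := lt_trans one_pos ht
      calc ENNReal.ofReal (t ^ (-(1 + s))) * ∫⁻ y in E \ Metric.ball x r,
            ENNReal.ofReal (heatKernel n t x y)
          ≤ ENNReal.ofReal (t ^ (-(1 + s))) * ∫⁻ y, ENNReal.ofReal (heatKernel n t x y) := by
            gcongr
            exact Measure.restrict_le_self
        _ = ENNReal.ofReal (t ^ (-(1 + s))) := by
            rw [heatKernel_lintegral_total n x ht0, mul_one]
    calc ENNReal.ofReal s * LambdaE n E x r s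
        ≤ ENNReal.ofReal s * ∫⁻ t in Set.Ioi (1:ℝ), ENNReal.ofReal (t ^ (-(1 + s))) := by gcongr
      _ = 1 := hsF s hs
  -- part (i)
  have main1 : ∀ x : V, ∀ r : ℝ, 0 < r →
      Tendsto (fun s : ℝ => ENNReal.ofReal s * LambdaE n Set.univ x r s)
        (𝓝[>] (0:ℝ)) (𝓝 1) := by
    intro x r hr
    set B := Metric.ball x r with hB
    set M : ℝ → ℝ≥0∞ := fun t => ∫⁻ y in B, ENNReal.ofReal (heatKernel n t x y) with hM
    have hMmeas : Measurable M := measurable_heat_setLintegral n x measurableSet_ball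
    -- split lemma : for t > 0,  ∫_{univ \ B} = 1 - M t  and  M t ≤ 1
    have hsplit : ∀ t : ℝ, 0 < t →
        M t + (∫⁻ y in Set.univ \ B, ENNReal.ofReal (heatKernel n t x y)) = 1 := by
      intro t ht
      have : Set.univ \ B = Bᶜ := (Set.compl_eq_univ_diff B).symm
      rw [this, lintegral_add_compl _ measurableSet_ball,
        heatKernel_lintegral_total n x ht]
    have hMle1 : ∀ t : ℝ, 0 < t → M t ≤ 1 := fun t ht =>
      le_of_le_of_eq (self_le_add_right _ _) (hsplit t ht)
    have hcompl : ∀ t : ℝ, 0 < t →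
        (∫⁻ y in Set.univ \ B, ENNReal.ofReal (heatKernel n t x y)) = 1 - M t := by
      intro t ht
      refine ENNReal.eq_sub_of_add_eq (ne_top_of_le_ne_top ENNReal.one_ne_top (hMle1 t ht)) ?_
      rw [add_comm]; exact hsplit t ht
    -- pointwise bound on M
    have hMbd : ∀ t : ℝ, 1 < t →
        M t ≤ ENNReal.ofReal ((4 * π) ^ (-(n:ℝ)/2)) * volume B * ENNReal.ofReal (t ^ (-(n:ℝ)/2)) := by
      intro t ht
      have ht0 : (0:ℝ) < t := lt_trans one_pos ht
      have hker : ∀ y : V, heatKernel n t x y ≤ (4 * π) ^ (-(n:ℝ)/2) * t ^ (-(n:ℝ)/2) := by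
        intro y
        unfold heatKernel
        have h1 : rexp (-‖x - y‖ ^ 2 / (4 * t)) ≤ 1 := by
          rw [Real.exp_le_one_iff, neg_div, neg_nonpos]
          positivity
        have h2 : (4 * π * t) ^ (-(n : ℝ) / 2) = (4 * π) ^ (-(n:ℝ)/2) * t ^ (-(n:ℝ)/2) := by
          rw [Real.mul_rpow (by positivity) ht0.le]
        calc (4 * π * t) ^ (-(n : ℝ) / 2) * rexp (-‖x - y‖ ^ 2 / (4 * t))
            ≤ (4 * π * t) ^ (-(n : ℝ) / 2) * 1 := by
              have : (0:ℝ) < 4 * π * t := by positivity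
              have hnn : (0:ℝ) ≤ (4 * π * t) ^ (-(n : ℝ) / 2) := by positivity
              exact mul_le_mul_of_nonneg_left h1 hnn
          _ = (4 * π) ^ (-(n:ℝ)/2) * t ^ (-(n:ℝ)/2) := by rw [mul_one, h2]
      calc M t ≤ ∫⁻ _ in B, ENNReal.ofReal ((4 * π) ^ (-(n:ℝ)/2) * t ^ (-(n:ℝ)/2)) := by
            refine setLIntegral_mono' measurableSet_ball fun y _ => ?_
            exact ENNReal.ofReal_le_ofReal (hker y)
        _ = ENNReal.ofReal ((4 * π) ^ (-(n:ℝ)/2) * t ^ (-(n:ℝ)/2)) * volume B :=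
            setLIntegral_const _ _
        _ = ENNReal.ofReal ((4 * π) ^ (-(n:ℝ)/2)) * volume B * ENNReal.ofReal (t ^ (-(n:ℝ)/2)) := by
            rw [ENNReal.ofReal_mul (by positivity)]; ring
    -- the constant K
    set c1 : ℝ≥0∞ := ENNReal.ofReal ((4 * π) ^ (-(n:ℝ)/2)) * volume B with hc1
    set K : ℝ≥0∞ := c1 * ENNReal.ofReal (2 / n) with hK
    have hc1top : c1 ≠ ∞ :=
      ENNReal.mul_ne_top ENNReal.ofReal_ne_top (measure_ball_lt_top).ne
    have hKtop : K ≠ ∞ := ENNReal.mul_ne_top hc1top ENNReal.ofReal_ne_top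
    -- bound on G s
    have hG : ∀ s : ℝ, 0 < s →
        (∫⁻ t in Set.Ioi (1:ℝ), ENNReal.ofReal (t ^ (-(1 + s))) * M t) ≤ K := by
      intro s hs
      have hstep : ∀ t ∈ Set.Ioi (1:ℝ),
          ENNReal.ofReal (t ^ (-(1 + s))) * M t ≤ c1 * ENNReal.ofReal (t ^ (-(1 + (n:ℝ)/2))) := by
        intro t ht
        have ht1 : (1:ℝ) < t := ht
        have ht0 : (0:ℝ) < t := lt_trans one_pos ht1
        calc ENNReal.ofReal (t ^ (-(1 + s))) * M t
            ≤ ENNReal.ofReal (t ^ (-(1:ℝ))) *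
                (c1 * ENNReal.ofReal (t ^ (-(n:ℝ)/2))) := by
              refine mul_le_mul ?_ (hMbd t ht1) zero_le zero_le
              exact ENNReal.ofReal_le_ofReal
                (Real.rpow_le_rpow_of_exponent_le ht1.le (by linarith))
          _ = c1 * ENNReal.ofReal (t ^ (-(1:ℝ)) * t ^ (-(n:ℝ)/2)) := by
              rw [ENNReal.ofReal_mul (by positivity)]; ring
          _ = c1 * ENNReal.ofReal (t ^ (-(1 + (n:ℝ)/2))) := by
              rw [← Real.rpow_add ht0]
              congr 2
              ring
      calc (∫⁻ t in Set.Ioi (1:ℝ), ENNReal.ofReal (t ^ (-(1 + s))) * M t)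
          ≤ ∫⁻ t in Set.Ioi (1:ℝ), c1 * ENNReal.ofReal (t ^ (-(1 + (n:ℝ)/2))) :=
            setLIntegral_mono' measurableSet_Ioi hstep
        _ = c1 * ∫⁻ t in Set.Ioi (1:ℝ), ENNReal.ofReal (t ^ (-(1 + (n:ℝ)/2))) :=
            lintegral_const_mul' _ _ hc1top
        _ = K := by
            have hhalf : (0:ℝ) < (n:ℝ)/2 := half_pos hnR
            rw [lintegral_Ioi_rpow_ofReal (by linarith)]
            have hx : (-(1 + (n:ℝ)/2) + 1) = -((n:ℝ)/2) := by ring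
            rw [hK, hx, neg_div_neg_eq, one_div_div]
    -- lower bound
    have key_ge : ∀ s : ℝ, 0 < s →
        1 - ENNReal.ofReal s * K ≤ ENNReal.ofReal s * LambdaE n Set.univ x r s := by
      intro s hs
      have hrw : LambdaE n Set.univ x r s
          = ∫⁻ t in Set.Ioi (1:ℝ),
              (ENNReal.ofReal (t ^ (-(1 + s))) - ENNReal.ofReal (t ^ (-(1 + s))) * M t) := by
        unfold LambdaE
        refine setLIntegral_congr_fun measurableSet_Ioi (fun t ht => ?_)
        have ht0 : (0:ℝ) < t := lt_trans one_pos ht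
        rw [hcompl t ht0, ENNReal.mul_sub (fun _ _ => ENNReal.ofReal_ne_top), mul_one]
      have hsub : (∫⁻ t in Set.Ioi (1:ℝ), ENNReal.ofReal (t ^ (-(1 + s))))
            - (∫⁻ t in Set.Ioi (1:ℝ), ENNReal.ofReal (t ^ (-(1 + s))) * M t)
          ≤ LambdaE n Set.univ x r s := by
        rw [hrw]
        exact lintegral_sub_le _ _ ((hFmeas s).mul hMmeas)
      calc 1 - ENNReal.ofReal s * K
          ≤ 1 - ENNReal.ofReal s * (∫⁻ t in Set.Ioi (1:ℝ),
              ENNReal.ofReal (t ^ (-(1 + s))) * M t) := by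
            refine tsub_le_tsub_left ?_ 1
            exact mul_le_mul_right (hG s hs) _
        _ = ENNReal.ofReal s * (∫⁻ t in Set.Ioi (1:ℝ), ENNReal.ofReal (t ^ (-(1 + s))))
            - ENNReal.ofReal s * (∫⁻ t in Set.Ioi (1:ℝ),
              ENNReal.ofReal (t ^ (-(1 + s))) * M t) := by rw [hsF s hs]
        _ = ENNReal.ofReal s * ((∫⁻ t in Set.Ioi (1:ℝ), ENNReal.ofReal (t ^ (-(1 + s))))
            - ∫⁻ t in Set.Ioi (1:ℝ), ENNReal.ofReal (t ^ (-(1 + s))) * M t) := by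
            rw [ENNReal.mul_sub (fun _ _ => ENNReal.ofReal_ne_top)]
        _ ≤ ENNReal.ofReal s * LambdaE n Set.univ x r s := mul_le_mul_right hsub _
    -- squeeze
    have hlow : Tendsto (fun s : ℝ => 1 - ENNReal.ofReal s * K) (𝓝[>] (0:ℝ)) (𝓝 1) := by
      have h1 : Tendsto (fun s : ℝ => ENNReal.ofReal s * K) (𝓝[>] (0:ℝ)) (𝓝 0) := by
        have h2 : Tendsto (fun s : ℝ => ENNReal.ofReal s) (𝓝[>] (0:ℝ)) (𝓝 0) := by
          have hid : Tendsto (fun s : ℝ => s) (𝓝[>] (0:ℝ)) (𝓝 (0:ℝ)) :=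
            Tendsto.mono_left tendsto_id nhdsWithin_le_nhds
          have := ENNReal.tendsto_ofReal hid
          simpa using this
        have := ENNReal.Tendsto.mul_const h2 (Or.inr hKtop)
        simpa using this
      have := ENNReal.Tendsto.sub (tendsto_const_nhds (x := (1:ℝ≥0∞))) h1
        (Or.inl ENNReal.one_ne_top)
      simpa using this
    refine tendsto_of_tendsto_of_tendsto_of_le_of_le' hlow tendsto_const_nhds ?_ ?_
    · filter_upwards [self_mem_nhdsWithin] with s hs
      exact key_ge s hs
    · filter_upwards [self_mem_nhdsWithin] with s hs
      exact key_le Set.univ x r s hs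
  refine ⟨main1, ?_⟩
  -- part (ii)
  intro E hEm x r hr ΞE hE
  set B := Metric.ball x r with hB
  have hadd : ∀ s : ℝ, 0 < s →
      ENNReal.ofReal s * LambdaE n E x r s + ENNReal.ofReal s * LambdaE n Eᶜ x r s
        = ENNReal.ofReal s * LambdaE n Set.univ x r s := by
    intro s hs
    rw [← mul_add]
    congr 1
    unfold LambdaE
    rw [← lintegral_add_left (show Measurable fun t : ℝ =>
        ENNReal.ofReal (t ^ (-(1 + s))) * ∫⁻ y in E \ Metric.ball x r, ENNReal.ofReal (heatKernel n t x y)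
      from (hFmeas s).mul
      (measurable_heat_setLintegral n x (hEm.diff measurableSet_ball)))]
    refine setLIntegral_congr_fun measurableSet_Ioi (fun t ht => ?_)
    rw [← mul_add]
    congr 1
    rw [← lintegral_union (hEm.compl.diff measurableSet_ball)
      (Set.disjoint_of_subset Set.diff_subset Set.diff_subset disjoint_compl_right)]
    congr 1
    rw [← Set.union_diff_distrib, Set.union_compl_self]
  have hfin : ∀ s : ℝ, 0 < s → ENNReal.ofReal s * LambdaE n E x r s ≠ ∞ := by
    intro s hs
    exact ne_top_of_le_ne_top ENNReal.one_ne_top (key_le E x r s hs)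
  have hsub : ∀ s : ℝ, 0 < s →
      ENNReal.ofReal s * LambdaE n Eᶜ x r s
        = ENNReal.ofReal s * LambdaE n Set.univ x r s - ENNReal.ofReal s * LambdaE n E x r s := by
    intro s hs
    rw [← hadd s hs, ENNReal.add_sub_cancel_left (hfin s hs)]
  have hΞle : ΞE ≤ 1 := by
    refine le_of_tendsto hE ?_
    filter_upwards [self_mem_nhdsWithin] with s hs
    exact key_le E x r s hs
  refine ⟨1 - ΞE, ?_, add_tsub_cancel_of_le hΞle⟩
  have htend : Tendsto (fun s : ℝ =>
      ENNReal.ofReal s * LambdaE n Set.univ x r s - ENNReal.ofReal s * LambdaE n E x r s)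
      (𝓝[>] (0:ℝ)) (𝓝 (1 - ΞE)) :=
    ENNReal.Tendsto.sub (main1 x r hr) hE (Or.inl ENNReal.one_ne_top)
  refine htend.congr' ?_
  filter_upwards [self_mem_nhdsWithin] with s hs
  exact (hsub s hs).symm
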